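/- Let {A_i}_{i∈I} and {B_j}_{j∈J} be two admissible coverings of ℝ^d \ {0} by d-balls A_i = B_d(ξ_i, δ_1 h̃(ξ_i)), B_j = B_d(ζ_j, δ_1 h̃(ζ_j)) with the same d-moderate radius function h̃ and with the pairwise-disjointness property at a smaller radius δ'. Then sup_{i∈I} #{j ∈ J : A_i ∩ B_j ≠ ∅} < ∞ and sup_{j∈J} #{i ∈ I : B_j ∩ A_i ≠ ∅} < ∞. -/

import Mathlib

noncomputable section

abbrev Ed (d : ℕ) := EuclideanSpace ℝ (Fin d)

def Da {d : ℕ} (a : Fin d → ℝ) (s : ℝ) (ξ : Ed d) : Ed d := WithLp.toLp 2 (fun i => s ^ (a i) * ξ i)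

def IsAnisoNorm {d : ℕ} (a : Fin d → ℝ) (anorm : Ed d → ℝ) : Prop :=
  anorm 0 = 0 ∧ ∀ ξ : Ed d, ξ ≠ 0 →
    ∀ t : ℝ, (0 < t ∧ ‖Da a (1 / t) ξ‖ = 1) ↔ anorm ξ = t

def IsModerate {d : ℕ} (anorm : Ed d → ℝ) (h : Ed d → ℝ) (δ₀ R : ℝ) : Prop :=
  ∀ ξ ζ : Ed d, ξ ≠ 0 → ζ ≠ 0 → anorm (ξ - ζ) ≤ δ₀ * h ξ →
    R⁻¹ ≤ h ξ / h ζ ∧ h ξ / h ζ ≤ R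


variable {d : ℕ} {a : Fin d → ℝ}

lemma Da_Da (ha : ∀ i, 0 < a i) {s t : ℝ} (hs : 0 ≤ s) (ht : 0 ≤ t)
    (ξ : Ed d) : Da a s (Da a t ξ) = Da a (s*t) ξ := by
  ext i; simp only [Da, PiLp.toLp_apply]; rw [Real.mul_rpow hs ht]; ring

lemma Da_one (ξ : Ed d) : Da a 1 ξ = ξ := by ext i; simp [Da]

lemma Da_add (s : ℝ) (x y : Ed d) : Da a s (x + y) = Da a s x + Da a s y := by
  ext i
  show s ^ a i * (x + y) i = (Da a s x + Da a s y) i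
  rw [PiLp.add_apply, PiLp.add_apply]
  show s ^ a i * (x i + y i) = s ^ a i * x i + s ^ a i * y i
  ring

lemma Da_zero_eq (s : ℝ) : Da a s (0 : Ed d) = 0 := by
  ext i; simp [Da]

lemma Da_neg (s : ℝ) (ξ : Ed d) : Da a s (-ξ) = -(Da a s ξ) := by
  ext i
  show s ^ a i * (-ξ) i = (-(Da a s ξ)) i
  show s ^ a i * (-(ξ i)) = -(s ^ a i * ξ i)
  ring

lemma Da_ne_zero (ha : ∀ i, 0 < a i) {s : ℝ} (hs : 0 < s) {ξ : Ed d} (hξ : ξ ≠ 0) :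
    Da a s ξ ≠ 0 := by
  intro h
  apply hξ
  have := congrArg (Da a s⁻¹) h
  rwa [Da_Da ha (by positivity) hs.le, inv_mul_cancel₀ hs.ne', Da_one, Da_zero_eq] at this

lemma norm_Da_sq (s : ℝ) (ξ : Ed d) :
    ‖Da a s ξ‖ ^ 2 = ∑ i, (s ^ (a i))^2 * (ξ i)^2 := by
  rw [EuclideanSpace.norm_eq, Real.sq_sqrt (by positivity)]
  refine Finset.sum_congr rfl fun i _ => ?_
  show ‖Da a s ξ i‖^2 = _
  show ‖s ^ a i * ξ i‖^2 = _
  rw [Real.norm_eq_abs, sq_abs, mul_pow]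

lemma norm_Da_strictAnti (ha : ∀ i, 0 < a i) {ξ : Ed d} (hξ : ξ ≠ 0)
    {s t : ℝ} (hs : 0 < s) (hst : s < t) :
    ‖Da a (1/t) ξ‖ < ‖Da a (1/s) ξ‖ := by
  have ht : 0 < t := hs.trans hst
  have hsq : ‖Da a (1/t) ξ‖^2 < ‖Da a (1/s) ξ‖^2 := by
    rw [norm_Da_sq, norm_Da_sq]
    obtain ⟨i₀, hi₀⟩ : ∃ i, ξ i ≠ 0 := by
      by_contra h
      push_neg at h
      exact hξ (PiLp.ext fun i => h i)
    have key : ∀ i, ((1/t) ^ (a i)) < ((1/s) ^ (a i)) := fun i =>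
      Real.rpow_lt_rpow (by positivity) (by
        rw [one_div, one_div]; exact inv_strictAnti₀ hs hst) (ha i)
    refine Finset.sum_lt_sum (fun i _ => ?_) ⟨i₀, Finset.mem_univ _, ?_⟩
    · apply mul_le_mul_of_nonneg_right _ (sq_nonneg _)
      exact pow_le_pow_left₀ (by positivity) (key i).le 2
    · apply mul_lt_mul_of_pos_right _ (by positivity)
      exact pow_lt_pow_left₀ (key i₀) (by positivity) (by norm_num)
  exact lt_of_pow_lt_pow_left₀ 2 (norm_nonneg _) hsq

variable (anorm : Ed d → ℝ)

lemma anorm_pos (hn : IsAnisoNorm a anorm) {ξ : Ed d} (hξ : ξ ≠ 0) :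
    0 < anorm ξ ∧ ‖Da a (1/anorm ξ) ξ‖ = 1 :=
  (hn.2 ξ hξ (anorm ξ)).mpr rfl

lemma anorm_lt_iff (ha : ∀ i, 0 < a i) (hn : IsAnisoNorm a anorm)
    {ξ : Ed d} (hξ : ξ ≠ 0) {r : ℝ} (hr : 0 < r) :
    anorm ξ < r ↔ ‖Da a (1/r) ξ‖ < 1 := by
  obtain ⟨hpos, hone⟩ := anorm_pos anorm hn hξ
  constructor
  · intro h
    calc ‖Da a (1/r) ξ‖ < ‖Da a (1/anorm ξ) ξ‖ := norm_Da_strictAnti ha hξ hpos h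
    _ = 1 := hone
  · intro h
    rcases lt_trichotomy (anorm ξ) r with h'|h'|h'
    · exact h'
    · rw [h'] at hone; rw [hone] at h; exact absurd h (lt_irrefl 1)
    · exfalso
      have := norm_Da_strictAnti ha hξ hr h'
      rw [hone] at this
      linarith

lemma anorm_le_of (ha : ∀ i, 0 < a i) (hn : IsAnisoNorm a anorm)
    {ξ : Ed d} (hξ : ξ ≠ 0) {r : ℝ} (hr : 0 < r) (h : ‖Da a (1/r) ξ‖ ≤ 1) :
    anorm ξ ≤ r := by
  obtain ⟨hpos, hone⟩ := anorm_pos anorm hn hξ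
  by_contra h'
  push_neg at h'
  have := norm_Da_strictAnti ha hξ hr h'
  rw [hone] at this
  linarith

lemma anorm_nonneg (hn : IsAnisoNorm a anorm) (ξ : Ed d) : 0 ≤ anorm ξ := by
  by_cases hξ : ξ = 0
  · rw [hξ, hn.1]
  · exact (anorm_pos anorm hn hξ).1.le

lemma anorm_neg (hn : IsAnisoNorm a anorm) (ξ : Ed d) : anorm (-ξ) = anorm ξ := by
  by_cases hξ : ξ = 0
  · rw [hξ, neg_zero]
  · have hνξ : -ξ ≠ 0 := fun h => hξ (by simpa using congrArg Neg.neg h)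
    obtain ⟨hpos, hone⟩ := anorm_pos anorm hn hξ
    apply (hn.2 (-ξ) hνξ (anorm ξ)).mp
    refine ⟨hpos, ?_⟩
    rw [Da_neg, norm_neg, hone]

lemma anorm_Da (ha : ∀ i, 0 < a i) (hn : IsAnisoNorm a anorm)
    {ξ : Ed d} (hξ : ξ ≠ 0) {s : ℝ} (hs : 0 < s) :
    anorm (Da a s ξ) = s * anorm ξ := by
  obtain ⟨hpos, hone⟩ := anorm_pos anorm hn hξ
  apply (hn.2 (Da a s ξ) (Da_ne_zero ha hs hξ) (s * anorm ξ)).mp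
  constructor
  · positivity
  · rw [Da_Da ha (by positivity) hs.le]
    rw [show 1 / (s * anorm ξ) * s = 1 / anorm ξ by field_simp]
    exact hone

section triangle
variable [NeZero d]

/-- minimum of the exponents -/
def amin (a : Fin d → ℝ) [NeZero d] : ℝ := Finset.univ.inf' (by simp [Finset.univ_nonempty]) a

lemma amin_pos (ha : ∀ i, 0 < a i) : 0 < amin a := by
  obtain ⟨i, _, hi⟩ := Finset.exists_mem_eq_inf' (s := (Finset.univ : Finset (Fin d)))
    (by simp [Finset.univ_nonempty]) a
  rw [amin, hi]; exact ha i

lemma amin_le (i : Fin d) : amin a ≤ a i := Finset.inf'_le _ (Finset.mem_univ i)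

/-- the quasi-triangle constant -/
def Kq (a : Fin d → ℝ) [NeZero d] : ℝ := (2:ℝ) ^ (1 / amin a)

lemma Kq_ge_one (ha : ∀ i, 0 < a i) : 1 ≤ Kq a := by
  have := amin_pos ha
  rw [Kq]
  apply Real.one_le_rpow (by norm_num)
  positivity

lemma norm_Da_anti (ha : ∀ i, 0 < a i) (ξ : Ed d) {s t : ℝ} (hs : 0 < s) (hst : s ≤ t) :
    ‖Da a (1/t) ξ‖ ≤ ‖Da a (1/s) ξ‖ := by
  by_cases hξ : ξ = 0
  · rw [hξ, Da_zero_eq, Da_zero_eq]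
  rcases eq_or_lt_of_le hst with h|h
  · rw [h]
  · exact (norm_Da_strictAnti ha hξ hs h).le

lemma norm_Da_le (ha : ∀ i, 0 < a i) {s : ℝ} (hs0 : 0 < s) (hs1 : s ≤ 1) (ξ : Ed d) :
    ‖Da a s ξ‖ ≤ s ^ (amin a) * ‖ξ‖ := by
  have h1 : ‖Da a s ξ‖^2 ≤ (s ^ amin a)^2 * ‖ξ‖^2 := by
    rw [norm_Da_sq]
    have : ‖ξ‖^2 = ∑ i, (ξ i)^2 := by
      rw [EuclideanSpace.norm_eq, Real.sq_sqrt (by positivity)]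
      refine Finset.sum_congr rfl fun i _ => ?_
      rw [Real.norm_eq_abs, sq_abs]
    rw [this, Finset.mul_sum]
    refine Finset.sum_le_sum fun i _ => ?_
    apply mul_le_mul_of_nonneg_right _ (sq_nonneg _)
    apply pow_le_pow_left₀ (by positivity)
    exact Real.rpow_le_rpow_of_exponent_ge hs0 hs1 (amin_le i)
  have h2 : (0:ℝ) ≤ s ^ amin a * ‖ξ‖ := by positivity
  refine le_of_pow_le_pow_left₀ two_ne_zero h2 ?_
  rw [mul_pow]
  exact h1

lemma anorm_triangle (ha : ∀ i, 0 < a i) (hn : IsAnisoNorm a anorm) (x y : Ed d) :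
    anorm (x + y) ≤ Kq a * (anorm x + anorm y) := by
  have hK := Kq_ge_one (a := a) ha
  by_cases hx : x = 0
  · rw [hx, zero_add, hn.1, zero_add]
    nlinarith [anorm_nonneg anorm hn y]
  by_cases hy : y = 0
  · rw [hy, add_zero, hn.1, add_zero]
    nlinarith [anorm_nonneg anorm hn x]
  by_cases hxy : x + y = 0
  · rw [hxy, hn.1]
    nlinarith [anorm_nonneg anorm hn x, (anorm_pos anorm hn hy).1]
  obtain ⟨hxp, hxe⟩ := anorm_pos anorm hn hx
  obtain ⟨hyp, hye⟩ := anorm_pos anorm hn hy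
  have htp : 0 < anorm x + anorm y := by positivity
  set t := anorm x + anorm y with htdef
  have hb : ‖Da a (1/t) (x+y)‖ ≤ 2 := by
    have hDx : ‖Da a (1/t) x‖ ≤ 1 := by
      calc ‖Da a (1/t) x‖ ≤ ‖Da a (1/anorm x) x‖ :=
            norm_Da_anti ha x hxp (by rw [htdef]; linarith)
      _ = 1 := hxe
    have hDy : ‖Da a (1/t) y‖ ≤ 1 := by
      calc ‖Da a (1/t) y‖ ≤ ‖Da a (1/anorm y) y‖ :=
            norm_Da_anti ha y hyp (by rw [htdef]; linarith)
      _ = 1 := hye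
    rw [Da_add]
    calc ‖Da a (1/t) x + Da a (1/t) y‖ ≤ ‖Da a (1/t) x‖ + ‖Da a (1/t) y‖ := norm_add_le _ _
    _ ≤ 2 := by linarith
  have hKt : 0 < Kq a * t := by positivity
  apply anorm_le_of anorm ha hn hxy hKt
  have : Da a (1 / (Kq a * t)) (x + y) = Da a (1/Kq a) (Da a (1/t) (x+y)) := by
    rw [Da_Da ha (by positivity) (by positivity)]
    congr 1
    field_simp
  rw [this]
  have hK1 : (0:ℝ) < 1 / Kq a := by positivity
  calc ‖Da a (1/Kq a) (Da a (1/t) (x+y))‖ ≤ (1/Kq a) ^ amin a * ‖Da a (1/t) (x+y)‖ :=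
        norm_Da_le ha hK1 (by rw [div_le_one (by positivity)]; exact hK) _
  _ ≤ (1/Kq a) ^ amin a * 2 := by
        apply mul_le_mul_of_nonneg_left hb
        positivity
  _ = 1 := by
        have hm := amin_pos (a := a) ha
        rw [Kq, one_div ((2:ℝ)^(1/amin a)), Real.inv_rpow (by positivity),
          ← Real.rpow_mul (by norm_num : (0:ℝ) ≤ 2), one_div, inv_mul_cancel₀ hm.ne',
          Real.rpow_one]
        norm_num

end triangle

section measures
open MeasureTheory

lemma Da_smul (s c : ℝ) (x : Ed d) : Da a s (c • x) = c • Da a s x := by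
  ext i
  show s ^ a i * (c • x) i = (c • Da a s x) i
  rw [PiLp.smul_apply, PiLp.smul_apply]
  show s ^ a i * (c * x i) = c * (s ^ a i * x i)
  ring

/-- `Da` as a linear map. -/
def DaL (a : Fin d → ℝ) (s : ℝ) : Ed d →ₗ[ℝ] Ed d where
  toFun := Da a s
  map_add' := Da_add s
  map_smul' := Da_smul s

lemma DaL_comp (ha : ∀ i, 0 < a i) {s t : ℝ} (hs : 0 ≤ s) (htt : 0 ≤ t) :
    (DaL a s) ∘ₗ (DaL a t) = DaL a (s * t) :=
  LinearMap.ext fun ξ => Da_Da ha hs htt ξ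

lemma DaL_one : DaL a 1 = LinearMap.id := LinearMap.ext fun ξ => Da_one ξ

lemma det_DaL_ne_zero (ha : ∀ i, 0 < a i) {s : ℝ} (hs : 0 < s) :
    LinearMap.det (DaL a s) ≠ 0 := by
  have h : LinearMap.det (DaL a s) * LinearMap.det (DaL a s⁻¹) = 1 := by
    rw [← LinearMap.det_comp, DaL_comp ha hs.le (by positivity),
      mul_inv_cancel₀ hs.ne', DaL_one, LinearMap.det_id]
  intro h0
  rw [h0, zero_mul] at h
  exact zero_ne_one h

/-- The "volume scaling factor". -/
def Dd (a : Fin d → ℝ) (s : ℝ) : ENNReal := ENNReal.ofReal |LinearMap.det (DaL a s)|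

lemma Dd_mul (ha : ∀ i, 0 < a i) {s t : ℝ} (hs : 0 ≤ s) (htt : 0 ≤ t) :
    Dd a (s * t) = Dd a s * Dd a t := by
  rw [Dd, Dd, Dd, ← DaL_comp ha hs htt, LinearMap.det_comp, abs_mul,
    ENNReal.ofReal_mul (abs_nonneg _)]

lemma Dd_pos (ha : ∀ i, 0 < a i) {s : ℝ} (hs : 0 < s) : 0 < Dd a s := by
  rw [Dd]
  exact ENNReal.ofReal_pos.mpr (abs_pos.mpr (det_DaL_ne_zero ha hs))

lemma Dd_ne_top (s : ℝ) : Dd a s ≠ ⊤ := ENNReal.ofReal_ne_top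

lemma abll_eq (ha : ∀ i, 0 < a i) (hn : IsAnisoNorm a anorm) (ξ : Ed d) {r : ℝ} (hr : 0 < r) :
    {ζ : Ed d | anorm (ζ - ξ) < r} = (fun ζ => DaL a r⁻¹ (ζ - ξ)) ⁻¹' Metric.ball 0 1 := by
  ext ζ
  simp only [Set.mem_setOf_eq, Set.mem_preimage, mem_ball_zero_iff]
  by_cases hζ : ζ = ξ
  · subst hζ
    simp only [sub_self]
    rw [hn.1]
    constructor
    · intro _
      show ‖Da a r⁻¹ 0‖ < 1
      rw [Da_zero_eq, norm_zero]; norm_num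
    · intro _; exact hr
  · have hne : ζ - ξ ≠ 0 := sub_ne_zero.mpr hζ
    rw [anorm_lt_iff anorm ha hn hne hr, one_div]
    rfl

lemma volume_abll (ha : ∀ i, 0 < a i) (hn : IsAnisoNorm a anorm) (ξ : Ed d) {r : ℝ}
    (hr : 0 < r) :
    volume {ζ : Ed d | anorm (ζ - ξ) < r} = Dd a r * volume (Metric.ball (0 : Ed d) 1) := by
  rw [abll_eq anorm ha hn ξ hr]
  have : (fun ζ : Ed d => DaL a r⁻¹ (ζ - ξ)) ⁻¹' Metric.ball 0 1
      = (fun ζ : Ed d => ζ + (-ξ)) ⁻¹' ((DaL a r⁻¹) ⁻¹' Metric.ball 0 1) := by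
    ext ζ
    simp [sub_eq_add_neg]
  rw [this, measure_preimage_add_right]
  rw [Measure.addHaar_preimage_linearMap volume (det_DaL_ne_zero ha (by positivity))]
  congr 1
  have h : LinearMap.det (DaL a r) * LinearMap.det (DaL a r⁻¹) = 1 := by
    rw [← LinearMap.det_comp, DaL_comp ha hr.le (by positivity),
      mul_inv_cancel₀ hr.ne', DaL_one, LinearMap.det_id]
  rw [Dd]
  congr 1
  rw [eq_inv_of_mul_eq_one_right h, inv_inv]

end measures

section counting
open MeasureTheory

lemma anorm_sub_comm (hn : IsAnisoNorm a anorm) (x y : Ed d) :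
    anorm (x - y) = anorm (y - x) := by
  rw [← anorm_neg anorm hn (x - y), neg_sub]

variable [NeZero d]

lemma exists_ne_zero_witness (ha : ∀ i, 0 < a i) (hn : IsAnisoNorm a anorm)
    {ξ₁ ξ₂ : Ed d} {r₁ r₂ : ℝ} (hr₁ : 0 < r₁) (hr₂ : 0 < r₂)
    (h : ∃ ζ : Ed d, anorm (ζ - ξ₁) < r₁ ∧ anorm (ζ - ξ₂) < r₂) :
    ∃ ζ : Ed d, ζ ≠ 0 ∧ anorm (ζ - ξ₁) < r₁ ∧ anorm (ζ - ξ₂) < r₂ := by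
  obtain ⟨ζ, h1, h2⟩ := h
  by_cases hζ : ζ ≠ 0
  · exact ⟨ζ, hζ, h1, h2⟩
  push_neg at hζ
  subst hζ
  -- the intersection is open and contains 0
  have hopen : IsOpen ({ζ : Ed d | anorm (ζ - ξ₁) < r₁} ∩ {ζ : Ed d | anorm (ζ - ξ₂) < r₂}) := by
    apply IsOpen.inter
    · rw [abll_eq anorm ha hn ξ₁ hr₁]
      exact Metric.isOpen_ball.preimage
        ((DaL a r₁⁻¹).continuous_of_finiteDimensional.comp
          (continuous_id.sub continuous_const))
    · rw [abll_eq anorm ha hn ξ₂ hr₂]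
      exact Metric.isOpen_ball.preimage
        ((DaL a r₂⁻¹).continuous_of_finiteDimensional.comp
          (continuous_id.sub continuous_const))
  obtain ⟨ε, hε, hball⟩ := Metric.isOpen_iff.mp hopen 0 ⟨h1, h2⟩
  have : Nontrivial (Ed d) := by
    have : Nonempty (Fin d) := Fin.pos_iff_nonempty.mp (Nat.pos_of_ne_zero (NeZero.ne d))
    infer_instance
  obtain ⟨v, hv⟩ := exists_ne (0 : Ed d)
  have hvn : 0 < ‖v‖ := norm_pos_iff.mpr hv
  set x : Ed d := (ε / (2 * ‖v‖)) • v with hx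
  have hx0 : x ≠ 0 := smul_ne_zero (by positivity) hv
  have hxball : x ∈ Metric.ball (0 : Ed d) ε := by
    rw [mem_ball_zero_iff, hx, norm_smul, Real.norm_eq_abs,
      abs_of_pos (by positivity : (0:ℝ) < ε / (2 * ‖v‖))]
    rw [div_mul_eq_mul_div, mul_comm]
    rw [div_lt_iff₀ (by positivity)]
    nlinarith
  obtain ⟨hx1, hx2⟩ := hball hxball
  exact ⟨x, hx0, hx1, hx2⟩

set_option maxHeartbeats 2000000 in
lemma count_bound (ha : ∀ i, 0 < a i) (hn : IsAnisoNorm a anorm)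
    (ht : Ed d → ℝ) (htpos : ∀ ξ : Ed d, ξ ≠ 0 → 0 < ht ξ)
    (δ₀ R : ℝ) (hR : 0 < R) (hmod : IsModerate anorm ht δ₀ R)
    (δ₁ : ℝ) (hδ₁ : 0 < δ₁) (hδ₁δ₀ : δ₁ < δ₀)
    {I J : Type} (ξA : I → Ed d) (ξB : J → Ed d)
    (hA0 : ∀ i, ξA i ≠ 0) (hB0 : ∀ j, ξB j ≠ 0)
    (δ' : ℝ) (hδ'0 : 0 < δ') (hδ'1 : δ' < δ₁)
    (hBdisj : ∀ j j', j ≠ j' → ∀ ζ : Ed d, ¬(anorm (ζ - ξB j) < δ' * ht (ξB j) ∧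
        anorm (ζ - ξB j') < δ' * ht (ξB j'))) :
    ∃ N : ℕ, ∀ i,
      {j | ∃ ζ : Ed d, anorm (ζ - ξA i) < δ₁ * ht (ξA i) ∧
        anorm (ζ - ξB j) < δ₁ * ht (ξB j)}.Finite ∧
      {j | ∃ ζ : Ed d, anorm (ζ - ξA i) < δ₁ * ht (ξA i) ∧
        anorm (ζ - ξB j) < δ₁ * ht (ξB j)}.ncard ≤ N := by
  classical
  set Rm : ℝ := max R 1 with hRm
  have hRm1 : 1 ≤ Rm := le_max_right _ _
  have hRm0 : 0 < Rm := lt_of_lt_of_le one_pos hRm1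
  set K : ℝ := Kq a with hKdef
  have hK1 : 1 ≤ K := Kq_ge_one ha
  have hK0 : 0 < K := lt_of_lt_of_le one_pos hK1
  set C₂ : ℝ := K * (δ' + K * δ₁ * (Rm^2 + 1)) + 1 with hC₂
  have hC₂0 : 0 < C₂ := by positivity
  set M : ENNReal := Dd a (C₂ * Rm^2 / δ') with hM
  have hM_top : M ≠ ⊤ := Dd_ne_top _
  refine ⟨⌈M.toReal⌉₊, fun i => ?_⟩
  set S : Set J := {j | ∃ ζ : Ed d, anorm (ζ - ξA i) < δ₁ * ht (ξA i) ∧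
    anorm (ζ - ξB j) < δ₁ * ht (ξB j)} with hS
  have hi0 : 0 < ht (ξA i) := htpos _ (hA0 i)
  set ρ : ℝ := δ' * ht (ξA i) / Rm^2 with hρ
  have hρ0 : 0 < ρ := by positivity
  -- basic facts about j ∈ S
  have key : ∀ j ∈ S, ht (ξA i) / Rm^2 ≤ ht (ξB j) ∧ ht (ξB j) ≤ Rm^2 * ht (ξA i) ∧
      anorm (ξB j - ξA i) ≤ K * δ₁ * (Rm^2 + 1) * ht (ξA i) := by
    intro j hj
    have hj0 : 0 < ht (ξB j) := htpos _ (hB0 j)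
    obtain ⟨ζ, hζ0, hζ1, hζ2⟩ := exists_ne_zero_witness anorm ha hn
      (by positivity) (by positivity) hj
    have hζt : 0 < ht ζ := htpos _ hζ0
    have hδ₁δ₀' : δ₁ ≤ δ₀ := hδ₁δ₀.le
    have m1 := hmod (ξA i) ζ (hA0 i) hζ0 (by
      rw [anorm_sub_comm anorm hn]
      nlinarith)
    have m2 := hmod (ξB j) ζ (hB0 j) hζ0 (by
      rw [anorm_sub_comm anorm hn]
      nlinarith)
    -- convert to multiplicative bounds with Rm
    have e1a : Rm⁻¹ * ht ζ ≤ ht (ξA i) := by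
      have h0 := m1.1
      rw [le_div_iff₀ hζt] at h0
      have h2 : Rm⁻¹ ≤ R⁻¹ := inv_anti₀ hR (le_max_left _ _)
      nlinarith
    have e1b : ht (ξA i) ≤ Rm * ht ζ := by
      have h1 := m1.2
      rw [div_le_iff₀ hζt] at h1
      nlinarith [le_max_left R 1]
    have e2a : Rm⁻¹ * ht ζ ≤ ht (ξB j) := by
      have h0 := m2.1
      rw [le_div_iff₀ hζt] at h0
      have h2 : Rm⁻¹ ≤ R⁻¹ := inv_anti₀ hR (le_max_left _ _)
      nlinarith
    have e2b : ht (ξB j) ≤ Rm * ht ζ := by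
      have h1 := m2.2
      rw [div_le_iff₀ hζt] at h1
      nlinarith [le_max_left R 1]
    have hRm_inv : Rm⁻¹ * Rm = 1 := inv_mul_cancel₀ hRm0.ne'
    constructor
    · -- ht (ξA i) / Rm^2 ≤ ht (ξB j)
      rw [div_le_iff₀ (by positivity)]
      calc ht (ξA i) ≤ Rm * ht ζ := e1b
      _ ≤ Rm * (Rm * ht (ξB j)) := by
          have : ht ζ ≤ Rm * ht (ξB j) := by
            have := e2a
            nlinarith [hRm_inv]
          nlinarith
      _ = ht (ξB j) * Rm^2 := by ring
    constructor
    · calc ht (ξB j) ≤ Rm * ht ζ := e2b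
      _ ≤ Rm * (Rm * ht (ξA i)) := by
          have : ht ζ ≤ Rm * ht (ξA i) := by nlinarith [hRm_inv, e1a]
          nlinarith
      _ = Rm^2 * ht (ξA i) := by ring
    · -- center distance
      have htri := anorm_triangle anorm ha hn (ξB j - ζ) (ζ - ξA i)
      rw [show ξB j - ζ + (ζ - ξA i) = ξB j - ξA i by abel] at htri
      rw [anorm_sub_comm anorm hn (ξB j) ζ] at htri
      have hb2 : ht (ξB j) ≤ Rm^2 * ht (ξA i) := by
        calc ht (ξB j) ≤ Rm * ht ζ := e2b
        _ ≤ Rm * (Rm * ht (ξA i)) := by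
            have : ht ζ ≤ Rm * ht (ξA i) := by nlinarith [hRm_inv, e1a]
            nlinarith
        _ = Rm^2 * ht (ξA i) := by ring
      calc anorm (ξB j - ξA i) ≤ K * (anorm (ζ - ξB j) + anorm (ζ - ξA i)) := htri
      _ ≤ K * (δ₁ * ht (ξB j) + δ₁ * ht (ξA i)) := by
          apply mul_le_mul_of_nonneg_left _ hK0.le
          linarith
      _ ≤ K * (δ₁ * (Rm^2 * ht (ξA i)) + δ₁ * ht (ξA i)) := by
          apply mul_le_mul_of_nonneg_left _ hK0.le
          have := mul_le_mul_of_nonneg_left hb2 hδ₁.le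
          linarith
      _ = K * δ₁ * (Rm^2 + 1) * ht (ξA i) := by ring
  -- core finset bound
  have core : ∀ t : Finset J, ↑t ⊆ S → t.card ≤ ⌈M.toReal⌉₊ := by
    intro t htS
    -- small balls
    set SB : J → Set (Ed d) := fun j => {ζ | anorm (ζ - ξB j) < ρ} with hSB
    have hmeas : ∀ j, MeasurableSet (SB j) := by
      intro j
      rw [hSB]
      simp only
      rw [abll_eq anorm ha hn (ξB j) hρ0]
      exact (Metric.isOpen_ball.preimage
        ((DaL a ρ⁻¹).continuous_of_finiteDimensional.comp
          (continuous_id.sub continuous_const))).measurableSet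
    have hdisj : (↑t : Set J).PairwiseDisjoint SB := by
      intro j hj j' hj' hne
      rw [Function.onFun, Set.disjoint_left]
      intro ζ hζj hζj'
      have hρj : ρ ≤ δ' * ht (ξB j) := by
        have := (key j (htS hj)).1
        rw [hρ, div_le_iff₀ (by positivity : (0:ℝ) < Rm^2)] at *
        nlinarith
      have hρj' : ρ ≤ δ' * ht (ξB j') := by
        have := (key j' (htS hj')).1
        rw [hρ, div_le_iff₀ (by positivity : (0:ℝ) < Rm^2)] at *
        nlinarith
      exact hBdisj j j' hne ζ ⟨lt_of_lt_of_le hζj hρj, lt_of_lt_of_le hζj' hρj'⟩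
    have hsub : ∀ j ∈ t, SB j ⊆ {ζ : Ed d | anorm (ζ - ξA i) < C₂ * ht (ξA i)} := by
      intro j hj ζ' hζ'
      obtain ⟨hge, hle, hcent⟩ := key j (htS hj)
      have h1 : anorm (ζ' - ξB j) < ρ := hζ'
      have htri := anorm_triangle anorm ha hn (ζ' - ξB j) (ξB j - ξA i)
      rw [show ζ' - ξB j + (ξB j - ξA i) = ζ' - ξA i by abel] at htri
      have hρle : ρ ≤ δ' * ht (ξA i) := by
        rw [hρ, div_le_iff₀ (by positivity : (0:ℝ) < Rm^2)]
        have h2 : (1:ℝ) ≤ Rm^2 := by nlinarith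
        nlinarith [mul_pos hδ'0 hi0]
      show anorm (ζ' - ξA i) < C₂ * ht (ξA i)
      calc anorm (ζ' - ξA i) ≤ K * (anorm (ζ' - ξB j) + anorm (ξB j - ξA i)) := htri
      _ ≤ K * (δ' * ht (ξA i) + K * δ₁ * (Rm^2 + 1) * ht (ξA i)) := by
          apply mul_le_mul_of_nonneg_left _ hK0.le
          have := lt_of_lt_of_le h1 hρle
          linarith
      _ = (C₂ - 1) * ht (ξA i) := by rw [hC₂]; ring
      _ < C₂ * ht (ξA i) := by nlinarith
    -- volume comparison
    set V : ENNReal := volume (Metric.ball (0 : Ed d) 1) with hV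
    have hV0 : 0 < V := Metric.measure_ball_pos volume 0 one_pos
    have hVtop : V ≠ ⊤ := (measure_ball_lt_top).ne
    have hvol_small : ∀ j, volume (SB j) = Dd a ρ * V :=
      fun j => volume_abll anorm ha hn (ξB j) hρ0
    have hunion : (⋃ j ∈ t, SB j) ⊆ {ζ : Ed d | anorm (ζ - ξA i) < C₂ * ht (ξA i)} := by
      intro ζ hζ
      simp only [Set.mem_iUnion] at hζ
      obtain ⟨j, hj, hζ⟩ := hζ
      exact hsub j hj hζ
    have hsum : ∑ j ∈ t, volume (SB j) = volume (⋃ j ∈ t, SB j) :=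
      (measure_biUnion_finset hdisj (fun j _ => hmeas j)).symm
    have hbound : (t.card : ENNReal) * (Dd a ρ * V) ≤ Dd a (C₂ * ht (ξA i)) * V := by
      calc (t.card : ENNReal) * (Dd a ρ * V) = ∑ _j ∈ t, (Dd a ρ * V) := by
            rw [Finset.sum_const, nsmul_eq_mul]
      _ = ∑ j ∈ t, volume (SB j) := by
            exact Finset.sum_congr rfl fun j _ => (hvol_small j).symm
      _ = volume (⋃ j ∈ t, SB j) := hsum
      _ ≤ volume {ζ : Ed d | anorm (ζ - ξA i) < C₂ * ht (ξA i)} := measure_mono hunion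
      _ = Dd a (C₂ * ht (ξA i)) * V := volume_abll anorm ha hn (ξA i) (by positivity)
    have hfactor : Dd a (C₂ * ht (ξA i)) = M * Dd a ρ := by
      rw [hM, ← Dd_mul ha (by positivity) hρ0.le]
      congr 1
      rw [hρ]
      field_simp
    rw [hfactor] at hbound
    have hcard : (t.card : ENNReal) ≤ M := by
      have hne : Dd a ρ * V ≠ 0 := by
        have := Dd_pos ha hρ0
        intro h
        rcases mul_eq_zero.mp h with h|h
        · exact this.ne' h
        · exact hV0.ne' h
      have hnt : Dd a ρ * V ≠ ⊤ := ENNReal.mul_ne_top (Dd_ne_top _) hVtop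
      have h' : (t.card : ENNReal) * (Dd a ρ * V) ≤ M * (Dd a ρ * V) := by
        calc (t.card : ENNReal) * (Dd a ρ * V) ≤ M * Dd a ρ * V := hbound
        _ = M * (Dd a ρ * V) := by ring
      exact (ENNReal.mul_le_mul_iff_left hne hnt).mp h'
    have hreal : (t.card : ℝ) ≤ M.toReal := by
      have := ENNReal.toReal_mono hM_top hcard
      rwa [ENNReal.toReal_natCast] at this
    exact_mod_cast hreal.trans (Nat.le_ceil _)
  -- conclude
  have hfin : S.Finite := by
    by_contra hinf
    obtain ⟨t, htS, htcard⟩ := Set.Infinite.exists_subset_card_eq hinf (⌈M.toReal⌉₊ + 1)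
    have := core t htS
    omega
  refine ⟨hfin, ?_⟩
  rw [Set.ncard_eq_toFinset_card S hfin]
  exact core hfin.toFinset (by simp)

end counting

/-- Any two admissible coverings `{A_i}`, `{B_j}` of `ℝ^d \ {0}` by d-balls with the same
d-moderate radius function `h̃` (with pairwise disjointness at a smaller radius `δ'`)
satisfy `sup_i #J(i) < ∞` and `sup_j #I(j) < ∞`. -/
theorem stmt7 {d : ℕ} (a : Fin d → ℝ) (ha : ∀ i, 0 < a i) (hsum : ∑ i, a i = d)
    (anorm : Ed d → ℝ) (hnorm : IsAnisoNorm a anorm)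
    (ht : Ed d → ℝ) (htpos : ∀ ξ : Ed d, ξ ≠ 0 → 0 < ht ξ)
    (δ₀ R : ℝ) (hδ₀ : 0 < δ₀) (hR : 0 < R) (hmod : IsModerate anorm ht δ₀ R)
    (c : ℝ) (hc : 0 < c) (hbd : ∀ ξ : Ed d, ξ ≠ 0 → ht ξ ≤ c * anorm ξ)
    (δ₁ : ℝ) (hδ₁ : 0 < δ₁) (hδ₁δ₀ : δ₁ < δ₀)
    (I J : Type) (ξA : I → Ed d) (ξB : J → Ed d)
    (hA0 : ∀ i, ξA i ≠ 0) (hB0 : ∀ j, ξB j ≠ 0)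
    (hAcov : ∀ ζ : Ed d, ζ ≠ 0 → ∃ i, anorm (ζ - ξA i) < δ₁ * ht (ξA i))
    (hBcov : ∀ ζ : Ed d, ζ ≠ 0 → ∃ j, anorm (ζ - ξB j) < δ₁ * ht (ξB j))
    (hAdisj : ∃ δ' : ℝ, 0 < δ' ∧ δ' < δ₁ ∧ ∀ i i', i ≠ i' →
      ∀ ζ : Ed d, ¬(anorm (ζ - ξA i) < δ' * ht (ξA i) ∧
        anorm (ζ - ξA i') < δ' * ht (ξA i')))
    (hBdisj : ∃ δ' : ℝ, 0 < δ' ∧ δ' < δ₁ ∧ ∀ j j', j ≠ j' →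
      ∀ ζ : Ed d, ¬(anorm (ζ - ξB j) < δ' * ht (ξB j) ∧
        anorm (ζ - ξB j') < δ' * ht (ξB j'))) :
    (∃ N : ℕ, ∀ i,
      {j | ∃ ζ : Ed d, anorm (ζ - ξA i) < δ₁ * ht (ξA i) ∧
        anorm (ζ - ξB j) < δ₁ * ht (ξB j)}.Finite ∧
      {j | ∃ ζ : Ed d, anorm (ζ - ξA i) < δ₁ * ht (ξA i) ∧
        anorm (ζ - ξB j) < δ₁ * ht (ξB j)}.ncard ≤ N) ∧
    (∃ N : ℕ, ∀ j,
      {i | ∃ ζ : Ed d, anorm (ζ - ξB j) < δ₁ * ht (ξB j) ∧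
        anorm (ζ - ξA i) < δ₁ * ht (ξA i)}.Finite ∧
      {i | ∃ ζ : Ed d, anorm (ζ - ξB j) < δ₁ * ht (ξB j) ∧
        anorm (ζ - ξA i) < δ₁ * ht (ξA i)}.ncard ≤ N) := by
  rcases Nat.eq_zero_or_pos d with hd | hd
  · subst hd
    have hzero : ∀ x : Ed 0, x = 0 := fun x => PiLp.ext fun i => i.elim0
    exact ⟨⟨0, fun i => (hA0 i (hzero (ξA i))).elim⟩,
      ⟨0, fun j => (hB0 j (hzero (ξB j))).elim⟩⟩
  · haveI : NeZero d := ⟨hd.ne'⟩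
    obtain ⟨δ'B, hδ'B0, hδ'B1, hBdisj'⟩ := hBdisj
    obtain ⟨δ'A, hδ'A0, hδ'A1, hAdisj'⟩ := hAdisj
    constructor
    · exact count_bound anorm ha hnorm ht htpos δ₀ R hR hmod δ₁ hδ₁ hδ₁δ₀ ξA ξB hA0 hB0
        δ'B hδ'B0 hδ'B1 hBdisj'
    · exact count_bound anorm ha hnorm ht htpos δ₀ R hR hmod δ₁ hδ₁ hδ₁δ₀ ξB ξA hB0 hA0
        δ'A hδ'A0 hδ'A1 hAdisj'
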